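/- Let f = max{f₁,…,f_N} with fᵢ convex differentiable, let (xᵏ) → x* ∈ argmin f with dist(0, ∂f(xᵏ)) → 0. Assume 0 ∈ relint ∂f(x*) (nondegeneracy) and Λ(x*) is a singleton. Then there exists k₀ such that I(xᵏ) = I(x*) for all k ≥ k₀. -/

import Mathlib

open Filter Topology

lemma asid_exists_weights {H : Type*} [AddCommGroup H] [Module ℝ H]
    {N : ℕ} (v : Fin N → H) (A : Set (Fin N)) (p : H)
    (hp : p ∈ convexHull ℝ (v '' A)) :
    ∃ w : Fin N → ℝ, (∀ j, 0 ≤ w j) ∧ (∑ j, w j) = 1 ∧ (∀ j, j ∉ A → w j = 0) ∧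
      (∑ j, w j • v j) = p := by
  classical
  have hAne : A.Nonempty := by
    by_contra h
    rw [Set.not_nonempty_iff_eq_empty] at h
    simp [h, convexHull_empty] at hp
  obtain ⟨a0, ha0⟩ := hAne
  rw [convexHull_eq] at hp
  obtain ⟨ι, t, w, z, hw0, hw1, hz, hcm⟩ := hp
  have hτ : ∀ i : ι, ∃ a : Fin N, a ∈ A ∧ (i ∈ t → v a = z i) := by
    intro i
    by_cases hi : i ∈ t
    · obtain ⟨a, ha, hva⟩ := hz i hi
      exact ⟨a, ha, fun _ => hva⟩
    · exact ⟨a0, ha0, fun h => absurd h hi⟩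
  choose τ hτA hτv using hτ
  refine ⟨fun j => ∑ i ∈ t.filter (fun i => τ i = j), w i, ?_, ?_, ?_, ?_⟩
  · intro j
    exact Finset.sum_nonneg fun i hi => hw0 i (Finset.mem_filter.mp hi).1
  · rw [Finset.sum_fiberwise t τ w, hw1]
  · intro j hj
    apply Finset.sum_eq_zero
    intro i hi
    obtain ⟨hit, hτi⟩ := Finset.mem_filter.mp hi
    exact absurd (hτi ▸ hτA i) hj
  · have key : ∀ j, (∑ i ∈ t.filter (fun i => τ i = j), w i) • v j
        = ∑ i ∈ t.filter (fun i => τ i = j), w i • v (τ i) := by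
      intro j
      rw [Finset.sum_smul]
      exact Finset.sum_congr rfl fun i hi => by
        rw [(Finset.mem_filter.mp hi).2]
    calc (∑ j, (∑ i ∈ t.filter (fun i => τ i = j), w i) • v j)
        = ∑ j, ∑ i ∈ t.filter (fun i => τ i = j), w i • v (τ i) :=
          Finset.sum_congr rfl fun j _ => key j
      _ = ∑ i ∈ t, w i • v (τ i) := Finset.sum_fiberwise t τ _
      _ = ∑ i ∈ t, w i • z i := Finset.sum_congr rfl fun i hi => by rw [hτv i hi]
      _ = p := by rw [← hcm, Finset.centerMass_eq_of_sum_1 _ _ hw1]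

lemma asid_relint_push {H : Type*} [NormedAddCommGroup H] [NormedSpace ℝ H]
    {C : Set H} (hC : (0 : H) ∈ intrinsicInterior ℝ C) {b : H} (hb : b ∈ C) :
    ∃ ε : ℝ, 0 < ε ∧ (-ε) • b ∈ C := by
  obtain ⟨p, hpInt, hp0⟩ := hC
  have h0C : (0 : H) ∈ C := intrinsicInterior_subset ⟨p, hpInt, hp0⟩
  have h0span : (0 : H) ∈ affineSpan ℝ C := subset_affineSpan ℝ C h0C
  have hbspan : b ∈ affineSpan ℝ C := subset_affineSpan ℝ C hb
  have hmem : ∀ t : ℝ, t • b ∈ affineSpan ℝ C := by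
    intro t
    have := AffineSubspace.smul_vsub_vadd_mem (affineSpan ℝ C) t hbspan h0span h0span
    simpa using this
  set c : ℝ → affineSpan ℝ C := fun t => ⟨t • b, hmem t⟩ with hc
  have hcont : Continuous c := by
    apply Continuous.subtype_mk
    exact continuous_id.smul continuous_const
  have hc0 : c 0 = p := by
    apply Subtype.ext
    simp [hc, hp0]
  have hev : ∀ᶠ t in nhds (0 : ℝ), c t ∈ interior ((↑) ⁻¹' C : Set (affineSpan ℝ C)) := by
    have : ContinuousAt c 0 := hcont.continuousAt
    rw [ContinuousAt, hc0] at this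
    exact this.eventually_mem (isOpen_interior.mem_nhds hpInt)
  obtain ⟨δ, hδ, hball⟩ := Metric.eventually_nhds_iff.mp hev
  refine ⟨δ / 2, by linarith, ?_⟩
  have : c (-(δ/2)) ∈ interior ((↑) ⁻¹' C : Set (affineSpan ℝ C)) := by
    apply hball
    rw [Real.dist_eq, sub_zero, abs_of_nonpos (by linarith)]
    linarith
  have := interior_subset this
  simpa [hc] using this

/-- If `xᵏ → x* ∈ argmin f` with `dist(0, ∂f(xᵏ)) → 0`, and the nondegeneracy
condition `0 ∈ relint ∂f(x*)` holds and `Λ(x*)` is a singleton, then the active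
set `I(xᵏ)` eventually equals `I(x*)`. -/
theorem active_set_identification {H : Type*} [NormedAddCommGroup H]
    [InnerProductSpace ℝ H] [FiniteDimensional ℝ H]
    (N : ℕ) [NeZero N] (f : Fin N → H → ℝ) (g : Fin N → H → H)
    (hconv : ∀ i, ConvexOn ℝ Set.univ (f i))
    (hg : ∀ i x, HasGradientAt (f i) (g i x) x)
    (hgc : ∀ i, Continuous (g i))
    (F : H → ℝ)
    (hF : ∀ x, F x = Finset.univ.sup' Finset.univ_nonempty (fun i => f i x))
    (x : ℕ → H) (xs : H) (hx : Tendsto x atTop (𝓝 xs))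
    (hmin : ∀ z, F xs ≤ F z)
    (hdist : Tendsto (fun k => Metric.infDist (0 : H)
        (convexHull ℝ ((fun i => g i (x k)) '' {i | f i (x k) = F (x k)})))
      atTop (𝓝 0))
    (hnd : (0 : H) ∈ intrinsicInterior ℝ
        (convexHull ℝ ((fun i => g i xs) '' {i | f i xs = F xs})))
    (hsingle : ∃ y, {y' : Fin N → ℝ | y' ∈ stdSimplex ℝ (Fin N) ∧
        (∑ j, y' j • g j xs) = 0 ∧ (∑ j, y' j * f j xs) = F xs} = {y}) :
    ∃ k0, ∀ k ≥ k0, {i : Fin N | f i (x k) = F (x k)} = {i | f i xs = F xs} := by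
  classical
  -- continuity of the f i and of F
  have hfc : ∀ i, Continuous (f i) := fun i =>
    continuous_iff_continuousAt.mpr fun z => (hg i z).hasFDerivAt.continuousAt
  have hFc : Continuous F := by
    have h1 : Continuous fun z => Finset.univ.sup' Finset.univ_nonempty (fun i : Fin N => f i z) :=
      Continuous.finset_sup'_apply (L := ℝ) (X := H) (f := f) Finset.univ_nonempty (fun i _ => hfc i)
    have h2 : F = fun z => Finset.univ.sup' Finset.univ_nonempty (fun i : Fin N => f i z) :=
      funext hF
    rw [h2]
    exact h1
  have hle : ∀ i z, f i z ≤ F z := by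
    intro i z
    rw [hF]
    exact Finset.le_sup' (fun j => f j z) (Finset.mem_univ i)
  have hact : ∀ z : H, ∃ i, f i z = F z := by
    intro z
    obtain ⟨i, _, hi⟩ := Finset.exists_mem_eq_sup' Finset.univ_nonempty (fun i => f i z)
    exact ⟨i, by rw [hF]; exact hi.symm⟩
  -- eventual inclusion I(xᵏ) ⊆ I(x*)
  have hincl : ∀ᶠ k in atTop,
      {i : Fin N | f i (x k) = F (x k)} ⊆ {i | f i xs = F xs} := by
    have key : ∀ i : Fin N, f i xs ≠ F xs → ∀ᶠ k in atTop, f i (x k) < F (x k) := by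
      intro i hi
      have hlt : f i xs < F xs := lt_of_le_of_ne (hle i xs) hi
      exact ((hfc i).tendsto xs |>.comp hx).eventually_lt ((hFc.tendsto xs).comp hx) hlt
    have : ∀ᶠ k in atTop, ∀ i : Fin N, f i xs ≠ F xs → f i (x k) < F (x k) := by
      rw [Filter.eventually_all]
      intro i
      by_cases hi : f i xs = F xs
      · exact Filter.Eventually.of_forall fun k h => absurd hi h
      · exact (key i hi).mono fun k hk _ => hk
    exact this.mono fun k hk i hik => by
      by_contra his
      exact absurd hik (ne_of_lt (hk i his))
  -- extract weights
  have hW : ∀ k, ∃ w : Fin N → ℝ, (∀ j, 0 ≤ w j) ∧ (∑ j, w j) = 1 ∧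
      (∀ j, j ∉ {i : Fin N | f i (x k) = F (x k)} → w j = 0) ∧
      ‖∑ j, w j • g j (x k)‖ = Metric.infDist (0 : H)
        (convexHull ℝ ((fun i => g i (x k)) '' {i | f i (x k) = F (x k)})) := by
    intro k
    have hcomp : IsCompact (convexHull ℝ ((fun i => g i (x k)) '' {i | f i (x k) = F (x k)})) :=
      ((Set.toFinite _).image _).isCompact_convexHull (𝕜 := ℝ)
    have hne : ((fun i => g i (x k)) '' {i | f i (x k) = F (x k)}).Nonempty := by
      obtain ⟨i, hi⟩ := hact (x k)
      exact ⟨g i (x k), i, hi, rfl⟩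
    obtain ⟨p, hpC, hpd⟩ := hcomp.exists_infDist_eq_dist
      (hne.mono (subset_convexHull ℝ _)) 0
    obtain ⟨w, hw0, hw1, hws, hwp⟩ := asid_exists_weights (fun j => g j (x k)) _ p hpC
    refine ⟨w, hw0, hw1, hws, ?_⟩
    rw [hwp, hpd]
    simp
  choose W hW0 hW1 hWs hWn using hW
  have hplim : Tendsto (fun k => ∑ j, W k j • g j (x k)) atTop (𝓝 0) := by
    rw [tendsto_zero_iff_norm_tendsto_zero]
    have : (fun k => ‖∑ j, W k j • g j (x k)‖)
        = fun k => Metric.infDist (0 : H)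
          (convexHull ℝ ((fun i => g i (x k)) '' {i | f i (x k) = F (x k)})) :=
      funext hWn
    rw [this]; exact hdist
  -- proof by contradiction
  by_contra h
  push_neg at h
  have hfr : ∃ᶠ k in atTop, {i : Fin N | f i (x k) = F (x k)} ≠ {i | f i xs = F xs} :=
    Filter.frequently_atTop.mpr h
  have hfr2 : ∃ᶠ k in atTop, ∃ i : Fin N, i ∈ {i | f i xs = F xs} ∧
      i ∉ {i : Fin N | f i (x k) = F (x k)} := by
    refine (hfr.and_eventually hincl).mono fun k ⟨hne, hsub⟩ => ?_
    obtain ⟨i, hi1, hi2⟩ := Set.exists_of_ssubset (lt_of_le_of_ne hsub hne)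
    exact ⟨i, hi1, hi2⟩
  have hEx : ∃ i : Fin N, i ∈ {i | f i xs = F xs} ∧
      ∃ᶠ k in atTop, i ∉ {i : Fin N | f i (x k) = F (x k)} := by
    by_contra hno
    push_neg at hno
    have hevall : ∀ᶠ k in atTop, ∀ i : Fin N,
        ¬(i ∈ {i | f i xs = F xs} ∧ i ∉ {i : Fin N | f i (x k) = F (x k)}) := by
      rw [Filter.eventually_all]
      intro i
      by_cases hi : i ∈ {i | f i xs = F xs}
      · have := hno i hi
        exact this.mono fun k hk ⟨_, h2⟩ => h2 hk
      · exact Filter.Eventually.of_forall fun k hk => hi hk.1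
    obtain ⟨k, ⟨i, hi⟩, hall⟩ := (hfr2.and_eventually hevall).exists
    exact hall i hi
  obtain ⟨i, hiAs, hifr⟩ := hEx
  obtain ⟨φ, hφmono, hφ⟩ := Filter.extraction_of_frequently_atTop hifr
  have hsimp : ∀ k, W k ∈ stdSimplex ℝ (Fin N) := fun k => ⟨hW0 k, hW1 k⟩
  obtain ⟨ybar, hybar, ψ, hψmono, hWlim⟩ :=
    (isCompact_stdSimplex ℝ (Fin N)).tendsto_subseq (fun n => hsimp (φ n))
  set σ : ℕ → ℕ := φ ∘ ψ with hσ
  have hσtop : Tendsto σ atTop atTop := (hφmono.comp hψmono).tendsto_atTop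
  have hxσ : Tendsto (fun n => x (σ n)) atTop (𝓝 xs) := hx.comp hσtop
  have hWcomp : ∀ j, Tendsto (fun n => W (σ n) j) atTop (𝓝 (ybar j)) := fun j =>
    ((continuous_apply j).tendsto ybar).comp hWlim
  -- ybar i = 0
  have hyi0 : ybar i = 0 := by
    have h1 : ∀ n, W (σ n) i = 0 := fun n => hWs (σ n) i (hφ (ψ n))
    have : (fun n => W (σ n) i) = fun _ => (0 : ℝ) := funext h1
    have h2 := hWcomp i
    rw [this] at h2
    exact tendsto_nhds_unique h2 tendsto_const_nhds
  -- ybar supported on I(x*)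
  have hsupp : ∀ j, j ∉ {i : Fin N | f i xs = F xs} → ybar j = 0 := by
    intro j hj
    have hev : ∀ᶠ n in atTop, W (σ n) j = 0 :=
      (hσtop.eventually hincl).mono fun n hs => hWs (σ n) j (fun hmem => hj (hs hmem))
    exact tendsto_nhds_unique (hWcomp j)
      ((tendsto_congr' (hev.mono fun n hn => hn.symm)).mp tendsto_const_nhds)
  -- gradient condition for ybar
  have hgrad : (∑ j, ybar j • g j xs) = 0 := by
    have hA : Tendsto (fun n => ∑ j, W (σ n) j • g j (x (σ n))) atTop
        (𝓝 (∑ j, ybar j • g j xs)) :=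
      tendsto_finset_sum _ fun j _ => (hWcomp j).smul (((hgc j).tendsto xs).comp hxσ)
    have hB : Tendsto (fun n => ∑ j, W (σ n) j • g j (x (σ n))) atTop (𝓝 0) :=
      hplim.comp hσtop
    exact tendsto_nhds_unique hA hB
  -- value condition helper
  have hval_of : ∀ w : Fin N → ℝ, (∑ j, w j) = 1 →
      (∀ j, j ∉ {i : Fin N | f i xs = F xs} → w j = 0) →
      (∑ j, w j * f j xs) = F xs := by
    intro w hw1 hws
    have : (∑ j, w j * f j xs) = ∑ j, w j * F xs := by
      refine Finset.sum_congr rfl fun j _ => ?_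
      by_cases hj : f j xs = F xs
      · rw [hj]
      · rw [hws j hj]; ring
    rw [this, ← Finset.sum_mul, hw1, one_mul]
  obtain ⟨y, hy⟩ := hsingle
  have hybar_eq : ybar = y := by
    have hmem : ybar ∈ {y' : Fin N → ℝ | y' ∈ stdSimplex ℝ (Fin N) ∧
        (∑ j, y' j • g j xs) = 0 ∧ (∑ j, y' j * f j xs) = F xs} :=
      ⟨hybar, hgrad, hval_of ybar hybar.2 hsupp⟩
    rwa [hy, Set.mem_singleton_iff] at hmem
  have hyi : y i = 0 := hybar_eq ▸ hyi0
  -- construct strictly positive multiplier from nondegeneracy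
  set t : Finset (Fin N) := {i : Fin N | f i xs = F xs}.toFinset with ht
  have hit : i ∈ t := Set.mem_toFinset.mpr hiAs
  have htne : t.Nonempty := ⟨i, hit⟩
  have hcard : (0 : ℝ) < (t.card : ℝ) := by exact_mod_cast htne.card_pos
  set b : H := t.centerMass (fun _ => (1 : ℝ)) (fun j => g j xs) with hb
  have hbC : b ∈ convexHull ℝ ((fun i => g i xs) '' {i | f i xs = F xs}) := by
    apply Finset.centerMass_mem_convexHull t (fun _ _ => zero_le_one)
    · rw [Finset.sum_const, nsmul_eq_mul, mul_one]
      exact hcard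
    · intro j hj
      exact ⟨j, Set.mem_toFinset.mp hj, rfl⟩
  obtain ⟨ε, hε, hεC⟩ := asid_relint_push hnd hbC
  obtain ⟨u, hu0, hu1, husupp, husum⟩ :=
    asid_exists_weights (fun j => g j xs) {i : Fin N | f i xs = F xs} ((-ε) • b) hεC
  have h1ε : (0 : ℝ) < 1 + ε := by linarith
  set lam : Fin N → ℝ := fun j =>
    (1 / (1 + ε)) * u j + (ε / (1 + ε)) * (if j ∈ t then ((t.card : ℝ))⁻¹ else 0) with hlam
  have hlam0 : ∀ j, 0 ≤ lam j := by
    intro j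
    apply add_nonneg
    · exact mul_nonneg (by positivity) (hu0 j)
    · apply mul_nonneg (by positivity)
      split
      · positivity
      · exact le_refl 0
  have hlam1 : (∑ j, lam j) = 1 := by
    simp only [hlam]
    rw [Finset.sum_add_distrib, ← Finset.mul_sum, ← Finset.mul_sum, hu1,
      Finset.sum_ite_mem, Finset.univ_inter, Finset.sum_const, nsmul_eq_mul,
      mul_inv_cancel₀ (ne_of_gt hcard)]
    field_simp
  have hbsum : b = ((t.card : ℝ))⁻¹ • ∑ j ∈ t, g j xs := by
    rw [hb, Finset.centerMass]
    simp [Finset.sum_const, nsmul_eq_mul]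
  have hlamgrad : (∑ j, lam j • g j xs) = 0 := by
    simp only [hlam]
    have expand : ∀ j, ((1 / (1 + ε)) * u j + (ε / (1 + ε)) *
        (if j ∈ t then ((t.card : ℝ))⁻¹ else 0)) • g j xs
        = (1 / (1 + ε)) • (u j • g j xs) + (ε / (1 + ε)) •
          ((if j ∈ t then ((t.card : ℝ))⁻¹ else 0) • g j xs) := by
      intro j
      rw [add_smul, mul_smul, mul_smul]
    rw [funext expand] at *
    rw [Finset.sum_add_distrib, ← Finset.smul_sum, ← Finset.smul_sum, husum]
    have : (∑ j, (if j ∈ t then ((t.card : ℝ))⁻¹ else 0) • g j xs) = b := by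
      have : ∀ j : Fin N, (if j ∈ t then ((t.card : ℝ))⁻¹ else 0) • g j xs
          = if j ∈ t then ((t.card : ℝ))⁻¹ • g j xs else 0 := by
        intro j; split <;> simp
      rw [funext this, Finset.sum_ite_mem, Finset.univ_inter, ← Finset.smul_sum, hbsum]
    rw [this, smul_smul, ← add_smul]
    have : (1 / (1 + ε)) * (-ε) + ε / (1 + ε) = 0 := by
      field_simp
      ring
    rw [this, zero_smul]
  have hlamsupp : ∀ j, j ∉ {i : Fin N | f i xs = F xs} → lam j = 0 := by
    intro j hj
    have h1 : u j = 0 := husupp j hj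
    have h2 : j ∉ t := fun hjt => hj (Set.mem_toFinset.mp hjt)
    simp [hlam, h1, h2]
  have hlam_eq : lam = y := by
    have hmem : lam ∈ {y' : Fin N → ℝ | y' ∈ stdSimplex ℝ (Fin N) ∧
        (∑ j, y' j • g j xs) = 0 ∧ (∑ j, y' j * f j xs) = F xs} :=
      ⟨⟨hlam0, hlam1⟩, hlamgrad, hval_of lam hlam1 hlamsupp⟩
    rwa [hy, Set.mem_singleton_iff] at hmem
  have hlampos : 0 < lam i := by
    have : lam i = (1 / (1 + ε)) * u i + (ε / (1 + ε)) * ((t.card : ℝ))⁻¹ := by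
      simp [hlam, hit]
    rw [this]
    have h1 : 0 ≤ (1 / (1 + ε)) * u i := mul_nonneg (by positivity) (hu0 i)
    have h2 : 0 < (ε / (1 + ε)) * ((t.card : ℝ))⁻¹ := by positivity
    linarith
  rw [hlam_eq] at hlampos
  rw [hyi] at hlampos
  exact lt_irrefl 0 hlampos
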